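/- Let c ≥ 1 be an integer and let g, g' : ℕ → ℝ. Suppose that for every θ ∈ (0,1) both families w ↦ g(w) · C(w+c-1, w) · (1-θ)^c · θ^w and w ↦ g'(w) · C(w+c-1, w) · (1-θ)^c · θ^w are absolutely summable over w ∈ ℕ and have equal sums. Then g(w) = g'(w) for all w ∈ ℕ. -/

import Mathlib

open FormalMultilinearSeries in
/-- If a real power series sums to `0` for every `θ ∈ (0,1)`, all coefficients vanish. -/
lemma aux_coeff_zero (a : ℕ → ℝ)
    (h : ∀ θ : ℝ, θ ∈ Set.Ioo (0 : ℝ) 1 → HasSum (fun w : ℕ => a w * θ ^ w) 0) :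
    ∀ w : ℕ, a w = 0 := by
  set p : FormalMultilinearSeries ℝ ℝ ℝ := ofScalars ℝ a with hpdef
  have hhalf : (1/2 : ℝ) ∈ Set.Ioo (0 : ℝ) 1 := by norm_num
  have hsum : Summable fun w : ℕ => |a w| * (1/2 : ℝ) ^ w := by
    have := (h (1/2) hhalf).summable.abs
    refine this.congr fun n => ?_
    rw [abs_mul, abs_pow, abs_of_nonneg (by norm_num : (0:ℝ) ≤ 1/2)]
  have hrad : ((2⁻¹ : NNReal) : ENNReal) ≤ p.radius := by
    apply p.le_radius_of_summable
    refine hsum.congr fun n => ?_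
    rw [hpdef, ofScalars_norm]
    norm_num [Real.norm_eq_abs]
  have hrpos : (0 : ENNReal) < (2⁻¹ : NNReal) := by norm_num
  have hball : HasFPowerSeriesOnBall p.sum p 0 ((2⁻¹ : NNReal)) :=
    (p.hasFPowerSeriesOnBall (lt_of_lt_of_le hrpos hrad)).mono hrpos hrad
  -- p.sum vanishes on (0, 1/2)
  have hzero : ∀ θ : ℝ, θ ∈ Set.Ioo (0 : ℝ) (1/2) → p.sum θ = 0 := by
    intro θ hθ
    have hθ' : θ ∈ Set.Ioo (0 : ℝ) 1 := ⟨hθ.1, by linarith [hθ.2]⟩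
    have : p.sum θ = ∑' n : ℕ, a n • θ ^ n := by
      rw [hpdef]
      exact congrFun (ofScalarsSum_eq_tsum (𝕜 := ℝ) (E := ℝ) a) θ
    rw [this]
    have := (h θ hθ').tsum_eq
    simpa [smul_eq_mul] using this
  -- identity theorem on the ball
  have hU : Metric.eball (0 : ℝ) ((2⁻¹ : NNReal)) = Metric.ball (0 : ℝ) (2⁻¹ : ℝ) := by
    rw [Metric.emetric_ball_nnreal]
    norm_num
  have hAn : AnalyticOnNhd ℝ p.sum (Metric.ball (0 : ℝ) (2⁻¹ : ℝ)) := by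
    rw [← hU]; exact hball.analyticOnNhd
  have hpre : IsPreconnected (Metric.ball (0 : ℝ) (2⁻¹ : ℝ)) :=
    (convex_ball _ _).isPreconnected
  have hmem : (1/4 : ℝ) ∈ Metric.ball (0 : ℝ) (2⁻¹ : ℝ) := by
    simp [Real.dist_eq]; norm_num
  have hfreq : ∃ᶠ z in nhdsWithin (1/4 : ℝ) {(1/4 : ℝ)}ᶜ, p.sum z = 0 := by
    have hev : ∀ᶠ z in nhds (1/4 : ℝ), p.sum z = 0 := by
      have hmemI : Set.Ioo (0 : ℝ) (1/2) ∈ nhds (1/4 : ℝ) :=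
        isOpen_Ioo.mem_nhds (by norm_num)
      filter_upwards [hmemI] with z hz using hzero z hz
    exact ((hev.filter_mono nhdsWithin_le_nhds).frequently)
  have hEq : Set.EqOn p.sum 0 (Metric.ball (0 : ℝ) (2⁻¹ : ℝ)) :=
    hAn.eqOn_zero_of_preconnected_of_frequently_eq_zero hpre hmem hfreq
  have hloc : ∀ᶠ z in nhds (0 : ℝ), p.sum z = 0 := by
    filter_upwards [Metric.ball_mem_nhds (0 : ℝ) (by norm_num : (0:ℝ) < 2⁻¹)] with z hz
    exact hEq hz
  have hp0 : p = 0 := (hball.hasFPowerSeriesAt.locally_zero_iff).mp hloc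
  have ha0 : a = 0 := by
    rw [hpdef] at hp0
    exact (ofScalars_series_eq_zero (E := ℝ)).mp hp0
  intro w; rw [ha0]; rfl

/-- Uniqueness part of Degroot's theorem: two unbiased estimators of
the same function under negative binomial sampling must coincide. -/
theorem stmt_7 (c : ℕ) (hc : 1 ≤ c) (g g' : ℕ → ℝ)
    (hgg' : ∀ θ : ℝ, θ ∈ Set.Ioo (0 : ℝ) 1 → ∃ s : ℝ,
      HasSum (fun w : ℕ =>
        g w * ((w + c - 1).choose w : ℝ) * (1 - θ) ^ c * θ ^ w) s ∧
      HasSum (fun w : ℕ =>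
        g' w * ((w + c - 1).choose w : ℝ) * (1 - θ) ^ c * θ ^ w) s) :
    ∀ w : ℕ, g w = g' w := by
  set a : ℕ → ℝ := fun w => (g w - g' w) * ((w + c - 1).choose w : ℝ) with ha
  have key : ∀ θ : ℝ, θ ∈ Set.Ioo (0 : ℝ) 1 → HasSum (fun w : ℕ => a w * θ ^ w) 0 := by
    intro θ hθ
    obtain ⟨s, h1, h2⟩ := hgg' θ hθ
    have hne : (1 - θ) ^ c ≠ 0 := pow_ne_zero _ (by have := hθ.2; intro hcon; linarith [sub_eq_zero.mp hcon])
    have hsub := (h1.sub h2)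
    rw [sub_self] at hsub
    have := hsub.mul_left (((1 - θ) ^ c)⁻¹)
    rw [mul_zero] at this
    have heq : (fun w : ℕ => ((1 - θ) ^ c)⁻¹ *
        (g w * ((w + c - 1).choose w : ℝ) * (1 - θ) ^ c * θ ^ w -
          g' w * ((w + c - 1).choose w : ℝ) * (1 - θ) ^ c * θ ^ w)) =
        fun w : ℕ => a w * θ ^ w := by
      funext w
      rw [ha]
      field_simp
    rwa [heq] at this
  intro w
  have h0 := aux_coeff_zero a key w
  have hch : (0 : ℝ) < ((w + c - 1).choose w : ℝ) := by
    have : w ≤ w + c - 1 := by omega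
    exact_mod_cast Nat.choose_pos this
  have := mul_eq_zero.mp h0
  rcases this with h | h
  · linarith [sub_eq_zero.mp h]
  · exact absurd h hch.ne'
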